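/- Let U ⊆ ℂ^n be open and let ρ : U → ℝ be a C² function with ρ < 0 on U and with everywhere nonnegative Levi form (L_ρ(x; v) ≥ 0 for all x ∈ U, v ∈ ℂ^n). Set ψ := −log(−ρ). Then for every x ∈ U and every v ∈ ℂ^n one has L_ψ(x; v) ≥ |∂ψ(x)(v)|². (This pointwise Levi-form inequality is the key estimate in the paper's proof that the complement of a closed complete pluripolar set carries a complete Kähler metric, Theorem 5.1.) -/

import Mathlib

open MeasureTheory Metric Complex Set ENNReal

noncomputable section

/-- Lebesgue measure on `ℂⁿ` (with its Euclidean metric structure). -/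
noncomputable instance (n : ℕ) : MeasureSpace (EuclideanSpace ℂ (Fin n)) :=
  { volume := Measure.map (MeasurableEquiv.toLp 2 (Fin n → ℂ)) volume }

instance (n : ℕ) : BorelSpace (EuclideanSpace ℂ (Fin n)) :=
  inferInstance

/-- The canonical extension of a nonpositive-infinity-allowing value to `ℝ≥0∞`:
`⊤ ↦ ⊤`, `⊥ ↦ 0`, reals to `ENNReal.ofReal`. -/
def EReal.toENNReal' (x : EReal) : ℝ≥0∞ :=
  if x = ⊤ then ⊤ else ENNReal.ofReal x.toReal

/-- The integral of an `EReal`-valued function: upper part minus lower part,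
computed with Lebesgue upper integrals and `EReal` subtraction. -/
def eIntegral {α : Type*} [MeasurableSpace α] (μ : Measure α) (f : α → EReal) : EReal :=
  ((∫⁻ a, (f a).toENNReal' ∂μ : ℝ≥0∞) : EReal) - ((∫⁻ a, (-(f a)).toENNReal' ∂μ : ℝ≥0∞) : EReal)

/-- `e^x ∈ [0,∞]` for `x ∈ [-∞,∞]`. -/
def eexp (x : EReal) : ℝ≥0∞ :=
  if x = ⊤ then ⊤ else if x = ⊥ then 0 else ENNReal.ofReal (Real.exp x.toReal)

/-- A function `u : ℂⁿ → [-∞,∞)` is plurisubharmonic on an open set `U` if it is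
upper semicontinuous on `U`, takes the value `⊤` nowhere on `U`, is not identically `⊥`
on any connected component of `U`, and satisfies the sub-mean value inequality on every
sufficiently small circle in every complex direction. -/
def IsPSH {n : ℕ} (U : Set (EuclideanSpace ℂ (Fin n))) (u : EuclideanSpace ℂ (Fin n) → EReal) :
    Prop :=
  UpperSemicontinuousOn u U ∧
  (∀ x ∈ U, u x ≠ ⊤) ∧
  (∀ x ∈ U, ∃ y ∈ connectedComponentIn U x, u y ≠ ⊥) ∧
  ∀ a ∈ U, ∀ b : EuclideanSpace ℂ (Fin n), ∃ r₀ > (0:ℝ), ∀ r : ℝ, 0 < r → r < r₀ →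
    (∀ θ : ℝ, a + ((r : ℂ) * Complex.exp (θ * Complex.I)) • b ∈ U) ∧
    u a ≤ (((2 * Real.pi)⁻¹ : ℝ) : EReal) *
      eIntegral (volume.restrict (Set.Ioc (0:ℝ) (2 * Real.pi)))
        (fun θ : ℝ => u (a + ((r : ℂ) * Complex.exp (θ * Complex.I)) • b))

/-- A set `E`, closed in an open set `Ω ⊆ ℂⁿ`, is complete pluripolar in `Ω` if every point
of `E` has an open neighborhood `U ⊆ Ω` carrying a plurisubharmonic function `φ` with
`E ∩ U = φ⁻¹(-∞)`. -/
def CompletePluripolarIn {n : ℕ} (Ω E : Set (EuclideanSpace ℂ (Fin n))) : Prop :=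
  ∀ x ∈ E, ∃ U : Set (EuclideanSpace ℂ (Fin n)), IsOpen U ∧ x ∈ U ∧ U ⊆ Ω ∧
    ∃ φ : EuclideanSpace ℂ (Fin n) → EReal, IsPSH U φ ∧ E ∩ U = {y ∈ U | φ y = ⊥}

/-- A bounded pseudoconvex domain in `ℂⁿ`: a bounded nonempty connected open set on which
`z ↦ -log dist(z, ℂⁿ ∖ Ω)` is plurisubharmonic. -/
def BoundedPseudoconvexDomain {n : ℕ} (Ω : Set (EuclideanSpace ℂ (Fin n))) : Prop :=
  IsOpen Ω ∧ IsConnected Ω ∧ Bornology.IsBounded Ω ∧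
  IsPSH Ω (fun z => ((-Real.log (Metric.infDist z Ωᶜ) : ℝ) : EReal))

/-- The Levi form of a real-valued function `u` on `ℂⁿ` at `x` in direction `v`:
`(1/4)` times the Laplacian at `w = 0` of `w ↦ u (x + w v)`. -/
def Levi {n : ℕ} (u : EuclideanSpace ℂ (Fin n) → ℝ) (x v : EuclideanSpace ℂ (Fin n)) : ℝ :=
  ((fderiv ℝ (fun w : ℂ => fderiv ℝ (fun w' : ℂ => u (x + w' • v)) w) 0) 1 1 +
   (fderiv ℝ (fun w : ℂ => fderiv ℝ (fun w' : ℂ => u (x + w' • v)) w) 0) Complex.I Complex.I) / 4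

/-- The `(1,0)`-differential `∂u(x)(v) = Σⱼ (∂u/∂zⱼ)(x) vⱼ` of a real-valued function `u`
on `ℂⁿ`, computed as `∂g/∂w (0) = (1/2)(∂ₓg - i ∂_y g)(0)` for `g(w) = u(x + w v)`. -/
def del1 {n : ℕ} (u : EuclideanSpace ℂ (Fin n) → ℝ) (x v : EuclideanSpace ℂ (Fin n)) : ℂ :=
  (((fderiv ℝ (fun w : ℂ => u (x + w • v)) 0) 1 : ℝ) -
    Complex.I * ((fderiv ℝ (fun w : ℂ => u (x + w • v)) 0) Complex.I : ℝ)) / 2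

set_option maxHeartbeats 1000000 in
/-- The key Levi-form estimate in the proof of Theorem 5.1: if `ρ < 0` is `C²` with nonnegative
Levi form on an open set `U ⊆ ℂⁿ`, then `ψ := -log(-ρ)` satisfies
`L_ψ(x; v) ≥ |∂ψ(x)(v)|²` at every point `x ∈ U` in every direction `v`. -/
theorem levi_form_lower_bound_neg_log
    {n : ℕ} (U : Set (EuclideanSpace ℂ (Fin n))) (hU : IsOpen U)
    (ρ : EuclideanSpace ℂ (Fin n) → ℝ) (hρC2 : ContDiffOn ℝ 2 ρ U)
    (hρneg : ∀ x ∈ U, ρ x < 0)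
    (hρpsh : ∀ x ∈ U, ∀ v : EuclideanSpace ℂ (Fin n), 0 ≤ Levi ρ x v)
    (ψ : EuclideanSpace ℂ (Fin n) → ℝ) (hψ : ∀ x, ψ x = -Real.log (-ρ x)) :
    ∀ x ∈ U, ∀ v : EuclideanSpace ℂ (Fin n), ‖del1 ψ x v‖ ^ 2 ≤ Levi ψ x v := by
  intro x hx v
  set h : ℂ → ℝ := fun w => ρ (x + w • v) with hh
  set F : ℂ → ℝ := fun w => -Real.log (-(h w)) with hF
  have hFeq : (fun w : ℂ => ψ (x + w • v)) = F := by
    funext w; simp [hψ, hF, hh]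
  have hA0 : x + (0:ℂ) • v = x := by simp
  -- h is C² at 0
  have hAcd : ContDiff ℝ 2 (fun w : ℂ => x + w • v) := by
    have h1 : ContDiff ℝ 2 (fun w : ℂ => w • v) :=
      (((ContinuousLinearMap.id ℂ ℂ).smulRight v).restrictScalars ℝ).contDiff
    exact contDiff_const.add h1
  have hhcd : ContDiffAt ℝ 2 h 0 := by
    have h1 : ContDiffAt ℝ 2 ρ (x + (0:ℂ) • v) := by
      rw [hA0]; exact hρC2.contDiffAt (hU.mem_nhds hx)
    exact h1.comp 0 hAcd.contDiffAt
  have hh0 : h 0 = ρ x := by rw [hh]; simp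
  have hh0neg : h 0 < 0 := by rw [hh0]; exact hρneg x hx
  set D0 : ℂ →L[ℝ] ℝ := fderiv ℝ h 0 with hD0def
  have hD0 : HasFDerivAt h D0 0 :=
    (hhcd.differentiableAt two_ne_zero).hasFDerivAt
  set H : ℂ →L[ℝ] ℂ →L[ℝ] ℝ := fderiv ℝ (fderiv ℝ h) 0 with hHdef
  have hH : HasFDerivAt (fderiv ℝ h) H 0 := by
    have := (hhcd.fderiv_right (m := 1) le_rfl).differentiableAt one_ne_zero
    exact this.hasFDerivAt
  -- eventual facts
  have hev : ∀ᶠ w in nhds (0:ℂ), h w < 0 ∧ HasFDerivAt h (fderiv ℝ h w) w := by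
    have hc : ContinuousAt h 0 := hhcd.continuousAt
    have h1 : ∀ᶠ w in nhds (0:ℂ), h w < 0 := hc.eventually_lt continuousAt_const hh0neg
    have h2 : ∀ᶠ w in nhds (0:ℂ), ContDiffAt ℝ 2 h w := hhcd.eventually (by norm_num)
    filter_upwards [h1, h2] with w hw1 hw2
    exact ⟨hw1, (hw2.differentiableAt two_ne_zero).hasFDerivAt⟩
  -- chain rule for F
  have hF' : ∀ w : ℂ, h w < 0 → HasFDerivAt h (fderiv ℝ h w) w →
      HasFDerivAt F ((-(h w)⁻¹) • fderiv ℝ h w) w := by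
    intro w hw hd
    have hlog : HasDerivAt (fun t : ℝ => -Real.log (-t)) (-(h w)⁻¹) (h w) := by
      have h1 : HasDerivAt (fun t : ℝ => -t) (-1) (h w) := (hasDerivAt_id _).neg
      have h2 : HasDerivAt Real.log (-(h w))⁻¹ (-(h w)) :=
        Real.hasDerivAt_log (by linarith)
      have h3 := (h2.comp (h w) h1).neg
      have h4 : -((-(h w))⁻¹ * -1) = -(h w)⁻¹ := by rw [inv_neg]; ring
      rw [h4] at h3
      exact h3
    exact hlog.comp_hasFDerivAt w hd
  have hF0 : HasFDerivAt F ((-(h 0)⁻¹) • D0) 0 := hF' 0 hh0neg hD0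
  -- derivative of c = fun w => -(h w)⁻¹
  have hcderiv : HasFDerivAt (fun w => -(h w)⁻¹) (((h 0 ^ 2)⁻¹) • D0) 0 := by
    have h1 : HasDerivAt (fun t : ℝ => -t⁻¹) ((h 0 ^ 2)⁻¹) (h 0) := by
      have h1' := (hasDerivAt_inv hh0neg.ne).neg
      simp only [neg_neg] at h1'
      exact h1'
    exact h1.comp_hasFDerivAt 0 hD0
  -- derivative of w ↦ (-(h w)⁻¹) • fderiv h w
  have hG : HasFDerivAt (fun w => (-(h w)⁻¹) • fderiv ℝ h w)
      ((-(h 0)⁻¹) • H + ((((h 0 ^ 2)⁻¹) • D0)).smulRight (fderiv ℝ h 0)) 0 :=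
    hcderiv.smul hH
  have hfdF : fderiv ℝ (fun w => fderiv ℝ F w) 0 =
      ((-(h 0)⁻¹) • H + ((((h 0 ^ 2)⁻¹) • D0)).smulRight (fderiv ℝ h 0)) := by
    have heq : (fun w => fderiv ℝ F w) =ᶠ[nhds (0:ℂ)]
        (fun w => (-(h w)⁻¹) • fderiv ℝ h w) := by
      filter_upwards [hev] with w hw
      exact (hF' w hw.1 hw.2).fderiv
    rw [heq.fderiv_eq]
    exact hG.fderiv
  -- abbreviations
  set a : ℝ := D0 1 with ha
  set b : ℝ := D0 Complex.I with hb
  set p : ℝ := H 1 1 with hp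
  set q : ℝ := H Complex.I Complex.I with hq
  set c0 : ℝ := -(h 0)⁻¹ with hc0
  have hc0pos : 0 < c0 := by
    rw [hc0]; simp only [neg_pos]; exact inv_neg''.mpr hh0neg
  -- Levi ψ
  have hLψ : Levi ψ x v = (c0 * p + (h 0 ^ 2)⁻¹ * a * a
      + (c0 * q + (h 0 ^ 2)⁻¹ * b * b)) / 4 := by
    rw [Levi]
    rw [show (fun w' : ℂ => ψ (x + w' • v)) = F from hFeq]
    rw [hfdF]
    simp [ContinuousLinearMap.add_apply, ContinuousLinearMap.smul_apply,
      ContinuousLinearMap.smulRight_apply, ← hD0def, ← ha, ← hb, ← hp, ← hq, ← hc0,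
      smul_eq_mul]
    try ring
  -- Levi ρ
  have hLρ : Levi ρ x v = (p + q) / 4 := by
    simp only [Levi, ← hh, ← hHdef, ← hp, ← hq]
  -- del1 ψ
  have hdel : del1 ψ x v = ((c0 * a : ℝ) - Complex.I * (c0 * b : ℝ)) / 2 := by
    rw [del1]
    rw [show (fun w : ℂ => ψ (x + w • v)) = F from hFeq]
    rw [hF0.fderiv]
    simp [ContinuousLinearMap.smul_apply, ← hD0def, ← ha, ← hb, ← hc0, smul_eq_mul]
  have hnorm : ‖del1 ψ x v‖ ^ 2 = (c0 ^ 2 * a ^ 2 + c0 ^ 2 * b ^ 2) / 4 := by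
    rw [hdel, Complex.sq_norm, map_div₀]
    simp [Complex.normSq_apply]
    ring
  have hLρ0 : 0 ≤ (p + q) / 4 := hLρ ▸ hρpsh x hx v
  have hc2 : (h 0 ^ 2)⁻¹ = c0 ^ 2 := by
    rw [hc0]; rw [← inv_pow]; ring
  rw [hnorm, hLψ, hc2]
  nlinarith [mul_nonneg hc0pos.le hLρ0]


end
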